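/- arXiv:1701.03723 — 4 statements merged into one kernel-verified Lean document; each statement's English description precedes it below -/
import Mathlib

section
/- For every positive integer k and every nonnegative integer r, and every integer p with p ≥ r+2, the Euler-type sum S(k, r+1; p) = Σ_{n=1}^∞ h_n^{(r+1)}(k)/n^p satisfies S(k, r+1; p) = (1/r!) · Σ_{l=1}^{r+1} [r+1; l] · Σ_{i+j=k, i,j ≥ 0} (−1)^i · ζ_r^⋆({1}_i) · U_{j,r}(p+1−l). -/
open Finset

/-- Multiple harmonic number `ζ_n({1}_m)`:
`ζ_n({1}_m) = ∑_{n ≥ n₁ > n₂ > ⋯ > n_m ≥ 1} 1/(n₁ ⋯ n_m)`, with `ζ_n({1}_0) = 1`. -/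
noncomputable def mhn : ℕ → ℕ → ℝ
  | _, 0 => 1
  | n, m + 1 => ∑ k ∈ Finset.Icc 1 n, mhn (k - 1) m / (k : ℝ)

/-- Multiple harmonic star number `ζ_n^⋆({1}_m)`:
`ζ_n^⋆({1}_m) = ∑_{n ≥ n₁ ≥ n₂ ≥ ⋯ ≥ n_m ≥ 1} 1/(n₁ ⋯ n_m)`, with `ζ_n^⋆({1}_0) = 1`. -/
noncomputable def mhsn : ℕ → ℕ → ℝ
  | _, 0 => 1
  | n, m + 1 => ∑ k ∈ Finset.Icc 1 n, mhsn k m / (k : ℝ)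

/-- Multiple harmonic number with repeated real argument `p`: `ζ_n({p}_m)`. -/
noncomputable def mhnP (p : ℝ) : ℕ → ℕ → ℝ
  | _, 0 => 1
  | n, m + 1 => ∑ k ∈ Finset.Icc 1 n, mhnP p (k - 1) m / (k : ℝ) ^ p

/-- Multiple harmonic star number with repeated real argument `p`: `ζ_n^⋆({p}_m)`. -/
noncomputable def mhsnP (p : ℝ) : ℕ → ℕ → ℝ
  | _, 0 => 1
  | n, m + 1 => ∑ k ∈ Finset.Icc 1 n, mhsnP p k m / (k : ℝ) ^ p

/-- Generalized harmonic number `H_n^{(p)} = ∑_{j=1}^n 1/j^p`. -/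
noncomputable def genH (p n : ℕ) : ℝ := ∑ j ∈ Finset.Icc 1 n, 1 / (j : ℝ) ^ p

/-- Auxiliary: `hypAux m n k = h_n^{(m+1)}(k)` for `k ≥ 1` (peel off the weak outer indices). -/
noncomputable def hypAux : ℕ → ℕ → ℕ → ℝ
  | 0, n, k => mhn n k
  | m + 1, n, k => ∑ j ∈ Finset.Icc 1 n, hypAux m j k

/-- Generalized hyperharmonic number `h_n^{(m)}(k)`, with the convention
`h_n^{(m)}(0) = C(m+n-1, m-1)`. -/
noncomputable def gh (n m k : ℕ) : ℝ :=
  if k = 0 then (Nat.choose (m + n - 1) (m - 1) : ℝ) else hypAux (m - 1) n k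

/-- Unsigned Stirling number of the first kind, defined by the standard recurrence,
equivalently by `x(x+1)⋯(x+n-1) = ∑_{k=0}^n [n; k] xᵏ`. -/
def stir1 : ℕ → ℕ → ℕ
  | 0, 0 => 1
  | 0, _ + 1 => 0
  | _ + 1, 0 => 0
  | n + 1, k + 1 => stir1 n k + n * stir1 n (k + 1)

/-- Multiple zeta value `ζ(p, {1}_m)`. -/
noncomputable def mzv (p m : ℕ) : ℝ := ∑' n : ℕ, mhn n m / (n + 1 : ℝ) ^ p

/-- Multiple zeta star value `ζ^⋆(p, {1}_m)`. -/
noncomputable def mzvStar (p m : ℕ) : ℝ := ∑' n : ℕ, mhsn (n + 1) m / (n + 1 : ℝ) ^ p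

/-- Riemann zeta value `ζ(p) = ∑_{n=1}^∞ 1/n^p`. -/
noncomputable def rz (p : ℕ) : ℝ := ∑' n : ℕ, 1 / (n + 1 : ℝ) ^ p

/-- `U_{m,r}(p) = ∑_{n=1}^∞ ζ_{n+r}({1}_m)/n^p`. -/
noncomputable def Usum (m r p : ℕ) : ℝ := ∑' n : ℕ, mhn (n + 1 + r) m / (n + 1 : ℝ) ^ p

/-- Strictly decreasing `q`-fold sum `Ā_q(n) = ∑_{1 ≤ k_q < ⋯ < k₁ ≤ n} a_{k₁}⋯a_{k_q}`,
with `Ā_0(n) = 1` (so `Ā_q(n) = 0` when `n < q`). -/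
def sdSum {R : Type*} [Semiring R] (a : ℕ → R) : ℕ → ℕ → R
  | _, 0 => 1
  | n, q + 1 => ∑ k ∈ Finset.Icc 1 n, a k * sdSum a (k - 1) q

/-- Weakly decreasing `q`-fold sum `A_q(n) = ∑_{1 ≤ k_q ≤ ⋯ ≤ k₁ ≤ n} a_{k₁}⋯a_{k_q}`,
with `A_0(n) = 1`. -/
def wdSum {R : Type*} [Semiring R] (a : ℕ → R) : ℕ → ℕ → R
  | _, 0 => 1
  | n, q + 1 => ∑ k ∈ Finset.Icc 1 n, a k * wdSum a k q

-- basic recurrences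
lemma sum_Icc_shift (f : ℕ → ℝ) : ∀ n, ∑ j ∈ Icc 1 (n+1), f j = f 1 + ∑ j ∈ Icc 1 n, f (j+1) := by
  intro n
  induction n with
  | zero => simp
  | succ n ih =>
      rw [Finset.sum_Icc_succ_top (by omega) f, ih, Finset.sum_Icc_succ_top (by omega) (fun j => f (j+1))]
      ring

lemma mhn_succ (n m : ℕ) : mhn (n+1) (m+1) = mhn n (m+1) + mhn n m / (n+1) := by
  show (∑ k ∈ Icc 1 (n+1), mhn (k-1) m / (k:ℝ)) = _
  rw [Finset.sum_Icc_succ_top (by omega)]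
  rw [show (n+1) - 1 = n from rfl]
  norm_cast

lemma mhsn_succ (n m : ℕ) : mhsn (n+1) (m+1) = mhsn n (m+1) + mhsn (n+1) m / (n+1) := by
  show (∑ k ∈ Icc 1 (n+1), mhsn k m / (k:ℝ)) = _
  rw [Finset.sum_Icc_succ_top (by omega)]
  norm_cast

lemma sdSum_succ_top (a : ℕ → ℝ) (n q : ℕ) :
    sdSum a (n+1) (q+1) = sdSum a n (q+1) + a (n+1) * sdSum a n q := by
  show (∑ k ∈ Icc 1 (n+1), a k * sdSum a (k-1) q) = _
  rw [Finset.sum_Icc_succ_top (by omega)]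
  rfl

lemma mhn_zero (k : ℕ) : mhn 0 (k+1) = 0 := by
  show (∑ k ∈ Icc 1 0, _ ) = 0
  simp

lemma mhsn_zero (k : ℕ) : mhsn 0 (k+1) = 0 := by
  show (∑ k ∈ Icc 1 0, _ ) = 0
  simp

lemma sdSum_zero (a : ℕ → ℝ) (k : ℕ) : sdSum a 0 (k+1) = 0 := by
  show (∑ k ∈ Icc 1 0, _ ) = 0
  simp


lemma mhn_zero' (n : ℕ) : mhn n 0 = 1 := rfl
lemma mhsn_zero' (n : ℕ) : mhsn n 0 = 1 := rfl
lemma sdSum_zero' {R : Type*} [Semiring R] (a : ℕ → R) (n : ℕ) : sdSum a n 0 = 1 := rfl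

lemma B_rec (r k : ℕ) :
    ∑ i ∈ range (k+2), (-1:ℝ)^i * mhsn (r+1) i * mhn r (k+1-i)
      = ∑ i ∈ range (k+2), (-1:ℝ)^i * mhsn r i * mhn r (k+1-i)
        - (1/((r:ℝ)+1)) * ∑ i ∈ range (k+1), (-1:ℝ)^i * mhsn (r+1) i * mhn r (k-i) := by
  rw [Finset.sum_range_succ' (fun i => (-1:ℝ)^i * mhsn (r+1) i * mhn r (k+1-i)) (k+1)]
  rw [Finset.sum_range_succ' (fun i => (-1:ℝ)^i * mhsn r i * mhn r (k+1-i)) (k+1)]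
  simp only [Nat.succ_sub_succ, Nat.sub_zero, pow_succ, pow_zero, one_mul, mhsn_succ,
    mhsn_zero']
  rw [Finset.mul_sum, add_sub_right_comm, ← Finset.sum_sub_distrib]
  congr 1
  apply Finset.sum_congr rfl
  intro i _
  ring

lemma A_rec (r k : ℕ) :
    ∑ i ∈ range (k+2), (-1:ℝ)^i * mhsn (r+1) i * mhn (r+1) (k+1-i)
      = ∑ i ∈ range (k+2), (-1:ℝ)^i * mhsn (r+1) i * mhn r (k+1-i)
        + (1/((r:ℝ)+1)) * ∑ i ∈ range (k+1), (-1:ℝ)^i * mhsn (r+1) i * mhn r (k-i) := by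
  have h1 : ∀ i ∈ range (k+1), (-1:ℝ)^i * mhsn (r+1) i * mhn (r+1) (k+1-i)
      = (-1:ℝ)^i * mhsn (r+1) i * mhn r (k+1-i)
        + (1/((r:ℝ)+1)) * ((-1:ℝ)^i * mhsn (r+1) i * mhn r (k-i)) := by
    intro i hi
    have hik : i ≤ k := by simpa using Nat.lt_succ_iff.mp (Finset.mem_range.mp hi)
    rw [show k+1-i = (k-i)+1 by omega, mhn_succ]
    ring
  rw [Finset.sum_range_succ (fun i => (-1:ℝ)^i * mhsn (r+1) i * mhn (r+1) (k+1-i)) (k+1)]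
  rw [Finset.sum_range_succ (fun i => (-1:ℝ)^i * mhsn (r+1) i * mhn r (k+1-i)) (k+1)]
  rw [Finset.sum_congr rfl h1, Finset.sum_add_distrib, Finset.mul_sum]
  simp only [Nat.sub_self, mhn_zero']
  ring

lemma inv_lemma (r : ℕ) : ∀ k, ∑ i ∈ range (k+1), (-1:ℝ)^i * mhsn r i * mhn r (k-i)
    = if k = 0 then 1 else 0 := by
  induction r with
  | zero =>
      intro k
      cases k with
      | zero => simp [mhsn_zero', mhn_zero']
      | succ k =>
          rw [Finset.sum_range_succ' (fun i => (-1:ℝ)^i * mhsn 0 i * mhn 0 (k+1-i)) (k+1)]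
          simp [mhsn_zero, mhn_zero]
  | succ r ih =>
      intro k
      cases k with
      | zero => simp [mhsn_zero', mhn_zero']
      | succ k =>
          rw [A_rec r k, B_rec r k, sub_add_cancel, ih (k+1)]

noncomputable def aS (r : ℕ) (m : ℕ) : ℝ := 1/((m:ℝ)+r)

lemma aS_shift (r : ℕ) : (fun m => aS r (m+1)) = aS (r+1) := by
  funext m
  simp only [aS]
  push_cast
  ring

lemma claimC (r : ℕ) : ∀ n k, ∑ i ∈ range (k+1), (-1:ℝ)^i * mhsn r i * mhn (n+r) (k-i)
    = sdSum (aS r) n k := by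
  intro n
  induction n with
  | zero =>
      intro k
      rw [Nat.zero_add, inv_lemma r k]
      cases k with
      | zero => simp [sdSum_zero']
      | succ k => simp [sdSum_zero]
  | succ n ih =>
      intro k
      cases k with
      | zero => simp [mhn_zero', mhsn_zero', sdSum_zero']
      | succ k =>
          have h1 : ∀ i ∈ range (k+1), (-1:ℝ)^i * mhsn r i * mhn (n+1+r) (k+1-i)
              = (-1:ℝ)^i * mhsn r i * mhn (n+r) (k+1-i)
                + aS r (n+1) * ((-1:ℝ)^i * mhsn r i * mhn (n+r) (k-i)) := by
            intro i hi
            have hik : i ≤ k := Nat.lt_succ_iff.mp (Finset.mem_range.mp hi)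
            rw [show n+1+r = (n+r)+1 by omega, show k+1-i = (k-i)+1 by omega, mhn_succ]
            simp only [aS]
            push_cast
            ring
          rw [Finset.sum_range_succ
            (fun i => (-1:ℝ)^i * mhsn r i * mhn (n+1+r) (k+1-i)) (k+1)]
          rw [Finset.sum_congr rfl h1, Finset.sum_add_distrib, ← Finset.mul_sum]
          rw [ih k, sdSum_succ_top]
          have h2 := ih (k+1)
          rw [Finset.sum_range_succ (fun i => (-1:ℝ)^i * mhsn r i * mhn (n+r) (k+1-i)) (k+1)] at h2
          simp only [Nat.sub_self, mhn_zero'] at h2 ⊢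
          linarith [h2]

lemma mhn_eq_sdSum : ∀ k n, mhn n k = sdSum (aS 0) n k := by
  intro k
  induction k with
  | zero => intro n; rfl
  | succ k ih =>
      intro n
      show (∑ j ∈ Icc 1 n, mhn (j-1) k / (j:ℝ)) = ∑ j ∈ Icc 1 n, aS 0 j * sdSum (aS 0) (j-1) k
      apply Finset.sum_congr rfl
      intro j _
      rw [ih (j-1)]
      simp only [aS]
      push_cast
      ring

lemma sdSum_shift (a : ℕ → ℝ) : ∀ q n, sdSum a (n+1) (q+1)
    = sdSum (fun m => a (m+1)) n (q+1) + a 1 * sdSum (fun m => a (m+1)) n q := by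
  intro q
  induction q with
  | zero =>
      intro n
      show (∑ j ∈ Icc 1 (n+1), a j * sdSum a (j-1) 0) = _
      rw [sum_Icc_shift (fun j => a j * sdSum a (j-1) 0) n]
      simp only [sdSum_zero']
      show a 1 * 1 + (∑ j ∈ Icc 1 n, a (j+1) * 1) = (∑ j ∈ Icc 1 n, a (j+1) * sdSum _ (j-1) 0) + a 1 * 1
      simp only [sdSum_zero']
      ring
  | succ q ih =>
      intro n
      show (∑ j ∈ Icc 1 (n+1), a j * sdSum a (j-1) (q+1)) = _
      rw [sum_Icc_shift (fun j => a j * sdSum a (j-1) (q+1)) n]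
      simp only [show (1:ℕ)-1 = 0 from rfl, sdSum_zero a q, mul_zero, zero_add]
      have h1 : ∀ j ∈ Icc 1 n, a (j+1) * sdSum a ((j+1)-1) (q+1)
          = a (j+1) * sdSum (fun m => a (m+1)) (j-1) (q+1)
            + a 1 * (a (j+1) * sdSum (fun m => a (m+1)) (j-1) q) := by
        intro j hj
        have hj1 : 1 ≤ j := (Finset.mem_Icc.mp hj).1
        have := ih (j-1)
        rw [show j-1+1 = j by omega] at this
        rw [show (j+1)-1 = j from rfl, this]
        ring
      rw [Finset.sum_congr rfl h1, Finset.sum_add_distrib, ← Finset.mul_sum]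
      rfl

lemma hyp_eq : ∀ r n k, hypAux r n (k+1)
    = (Nat.choose (n+r) r : ℝ) * sdSum (aS r) n (k+1) := by
  intro r
  induction r with
  | zero =>
      intro n k
      show mhn n (k+1) = _
      rw [mhn_eq_sdSum]
      simp
  | succ r ih =>
      intro n
      induction n with
      | zero =>
          intro k
          show (∑ j ∈ Icc 1 0, hypAux r j (k+1)) = _
          simp [sdSum_zero]
      | succ n ihn =>
          intro k
          show (∑ j ∈ Icc 1 (n+1), hypAux r j (k+1)) = _
          rw [Finset.sum_Icc_succ_top (by omega), ih (n+1) k]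
          rw [show (∑ j ∈ Icc 1 n, hypAux r j (k+1)) = hypAux (r+1) n (k+1) from rfl, ihn k]
          have hshift := sdSum_shift (aS r) k n
          rw [aS_shift] at hshift
          rw [hshift, sdSum_succ_top (aS (r+1)) n k]
          have hp1 : ((n+r+2).choose (r+1) : ℝ) = (n+r+1).choose r + (n+r+1).choose (r+1) := by
            exact_mod_cast congrArg Nat.cast (Nat.choose_succ_succ (n+r+1) r)
          have hp2' := Nat.add_one_mul_choose_eq (n+r+1) r
          have hp2 : ((n:ℝ)+r+2) * (n+r+1).choose r = ((n+r+2).choose (r+1)) * ((r:ℝ)+1) := by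
            have : ((n+r+1+1) * (n+r+1).choose r : ℕ) = ((n+r+1+1).choose (r+1) * (r+1) : ℕ) := hp2'
            exact_mod_cast congrArg Nat.cast this
          rw [show n+(r+1) = n+r+1 by omega, show n+1+(r+1) = n+r+2 by omega,
            show n+1+r = n+r+1 by omega]
          simp only [aS]
          push_cast
          set x := sdSum (aS (r+1)) n (k+1)
          set y := sdSum (aS (r+1)) n k
          have hr1 : ((r:ℝ)+1) ≠ 0 := by positivity
          have hnr : ((n:ℝ)+r+2) ≠ 0 := by positivity
          field_simp
          linear_combination (-(((r:ℝ)+1)*((n:ℝ)+↑r+2)*x)) * hp1 + y * hp2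

lemma stir1_zero (n : ℕ) : stir1 (n+1) 0 = 0 := rfl

lemma stir1_overflow : ∀ n k, n < k → stir1 n k = 0 := by
  intro n
  induction n with
  | zero =>
      intro k hk
      cases k with
      | zero => omega
      | succ k => rfl
  | succ n ih =>
      intro k hk
      cases k with
      | zero => omega
      | succ k =>
          show stir1 n k + n * stir1 n (k+1) = 0
          rw [ih k (by omega), ih (k+1) (by omega)]
          simp

lemma stir1_prod (r : ℕ) : ∀ N : ℕ, ∏ t ∈ range (r+1), (N + t)
    = ∑ l ∈ range (r+2), stir1 (r+1) l * N^l := by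
  induction r with
  | zero =>
      intro N
      simp [Finset.prod_range_succ, Finset.sum_range_succ, stir1]
  | succ r ih =>
      intro N
      rw [Finset.prod_range_succ, ih N]
      rw [Finset.sum_range_succ' (fun l => stir1 (r+2) l * N^l) (r+2)]
      have hrec : ∀ l, stir1 (r+2) (l+1) = stir1 (r+1) l + (r+1) * stir1 (r+1) (l+1) := by
        intro l; rfl
      simp only [hrec, stir1_zero, pow_zero, Nat.zero_mul, Nat.add_zero, Nat.mul_one]
      have e1 : (∑ l ∈ range (r+2), stir1 (r+1) l * N^l) * N
          = ∑ l ∈ range (r+2), stir1 (r+1) l * N^(l+1) := by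
        rw [Finset.sum_mul]
        exact Finset.sum_congr rfl fun l _ => by ring
      have e2 : ∑ x ∈ range (r+2), stir1 (r+1) (x+1) * N^(x+1)
          = ∑ l ∈ range (r+2), stir1 (r+1) l * N^l := by
        rw [Finset.sum_range_succ (fun x => stir1 (r+1) (x+1) * N^(x+1)) (r+1),
          stir1_overflow (r+1) (r+2) (by omega),
          Finset.sum_range_succ' (fun l => stir1 (r+1) l * N^l) (r+1), stir1_zero]
        simp
      have e3 : ∑ x ∈ range (r+2), (stir1 (r+1) x + (r+1) * stir1 (r+1) (x+1)) * N^(x+1)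
          = ∑ x ∈ range (r+2), stir1 (r+1) x * N^(x+1)
            + (r+1) * ∑ x ∈ range (r+2), stir1 (r+1) (x+1) * N^(x+1) := by
        rw [Finset.mul_sum, ← Finset.sum_add_distrib]
        exact Finset.sum_congr rfl fun l _ => by ring
      rw [e3, e2, mul_add, e1]
      ring

lemma asc_prod (n : ℕ) : ∀ r : ℕ, (Nat.choose (n+1+r) r) * r.factorial * (n+1)
    = ∏ t ∈ range (r+1), (n+1+t) := by
  intro r
  induction r with
  | zero => simp
  | succ r ih =>
      rw [Finset.prod_range_succ, ← ih]
      have h := Nat.add_one_mul_choose_eq (n+r+1) r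
      rw [show n+1+(r+1) = n+r+1+1 by omega, show n+1+r = n+r+1 by omega, Nat.factorial_succ]
      calc (n+r+1+1).choose (r+1) * ((r+1) * r.factorial) * (n+1)
          = ((n+r+1+1).choose (r+1) * (r+1)) * r.factorial * (n+1) := by ring
        _ = ((n+r+1+1) * (n+r+1).choose r) * r.factorial * (n+1) := by rw [← h]
        _ = (n+r+1).choose r * r.factorial * (n+1) * (n+r+1+1) := by ring

lemma sum_Icc_one_range (f : ℕ → ℝ) : ∀ n, ∑ j ∈ Icc 1 n, f j = ∑ i ∈ range n, f (i+1) := by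
  intro n
  induction n with
  | zero => simp
  | succ n ih => rw [Finset.sum_Icc_succ_top (by omega) f, ih, Finset.sum_range_succ]

lemma choose_real (n r : ℕ) : (Nat.choose (n+1+r) r : ℝ) * r.factorial
    = ∑ l ∈ Icc 1 (r+1), (stir1 (r+1) l : ℝ) * ((n:ℝ)+1)^(l-1) := by
  have hN := stir1_prod r (n+1)
  rw [← asc_prod n r] at hN
  rw [Finset.sum_range_succ' (fun l => stir1 (r+1) l * (n+1)^l) (r+1), stir1_zero] at hN
  simp only [pow_zero, Nat.zero_mul, Nat.mul_one, Nat.add_zero] at hN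
  have hN2 : (Nat.choose (n+1+r) r) * r.factorial * (n+1)
      = (∑ l ∈ range (r+1), stir1 (r+1) (l+1) * (n+1)^l) * (n+1) := by
    rw [hN, Finset.sum_mul]
    apply Finset.sum_congr rfl
    intro l _
    ring
  have hN3 : (Nat.choose (n+1+r) r) * r.factorial
      = ∑ l ∈ range (r+1), stir1 (r+1) (l+1) * (n+1)^l :=
    Nat.eq_of_mul_eq_mul_right (by omega) hN2
  have hIcc : ∑ l ∈ Icc 1 (r+1), (stir1 (r+1) l : ℝ) * ((n:ℝ)+1)^(l-1)
      = ∑ l ∈ range (r+1), (stir1 (r+1) (l+1) : ℝ) * ((n:ℝ)+1)^l := by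
    rw [sum_Icc_one_range (fun l => (stir1 (r+1) l : ℝ) * ((n:ℝ)+1)^(l-1)) (r+1)]
    exact Finset.sum_congr rfl fun l _ => by simp
  rw [hIcc]
  exact_mod_cast congrArg Nat.cast hN3

lemma mhn_nonneg : ∀ m n, 0 ≤ mhn n m := by
  intro m
  induction m with
  | zero => intro n; norm_num [mhn_zero']
  | succ m ih =>
      intro n
      show 0 ≤ ∑ k ∈ Icc 1 n, mhn (k-1) m / (k:ℝ)
      apply Finset.sum_nonneg
      intro k _
      exact div_nonneg (ih (k-1)) (by positivity)

lemma mhsn_nonneg : ∀ m n, 0 ≤ mhsn n m := by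
  intro m
  induction m with
  | zero => intro n; norm_num [mhsn_zero']
  | succ m ih =>
      intro n
      show 0 ≤ ∑ k ∈ Icc 1 n, mhsn k m / (k:ℝ)
      apply Finset.sum_nonneg
      intro k _
      exact div_nonneg (ih k) (by positivity)

lemma mhsn_mono (m : ℕ) : ∀ {n n' : ℕ}, n ≤ n' → mhsn n m ≤ mhsn n' m := by
  intro n n' h
  cases m with
  | zero => simp [mhsn_zero']
  | succ m =>
      show (∑ k ∈ Icc 1 n, mhsn k m / (k:ℝ)) ≤ ∑ k ∈ Icc 1 n', mhsn k m / (k:ℝ)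
      apply Finset.sum_le_sum_of_subset_of_nonneg (Finset.Icc_subset_Icc_right h)
      intro k _ _
      exact div_nonneg (mhsn_nonneg m k) (by positivity)

lemma mhn_le_mhsn : ∀ m n, mhn n m ≤ mhsn n m := by
  intro m
  induction m with
  | zero => intro n; simp [mhn_zero', mhsn_zero']
  | succ m ih =>
      intro n
      show (∑ k ∈ Icc 1 n, mhn (k-1) m / (k:ℝ)) ≤ ∑ k ∈ Icc 1 n, mhsn k m / (k:ℝ)
      apply Finset.sum_le_sum
      intro k hk
      have hk1 : (1:ℕ) ≤ k := (Finset.mem_Icc.mp hk).1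
      have hkpos : (0:ℝ) < k := by exact_mod_cast hk1
      have h1 : mhn (k-1) m ≤ mhsn k m := (ih (k-1)).trans (mhsn_mono m (Nat.sub_le k 1))
      gcongr

noncomputable def myH (n : ℕ) : ℝ := ∑ j ∈ Icc 1 n, 1/(j:ℝ)

lemma myH_nonneg (n : ℕ) : 0 ≤ myH n := by
  apply Finset.sum_nonneg; intro j _; positivity

lemma mhsn_le_pow : ∀ m n, mhsn n m ≤ (myH n)^m := by
  intro m
  induction m with
  | zero => intro n; simp [mhsn_zero']
  | succ m ih =>
      intro n
      show (∑ k ∈ Icc 1 n, mhsn k m / (k:ℝ)) ≤ (myH n)^(m+1)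
      have : ∀ k ∈ Icc 1 n, mhsn k m / (k:ℝ) ≤ (myH n)^m * (1/(k:ℝ)) := by
        intro k hk
        rw [div_eq_mul_one_div]
        apply mul_le_mul_of_nonneg_right ?_ (by positivity)
        exact (ih k).trans (pow_le_pow_left₀ (myH_nonneg k)
          (by
            apply Finset.sum_le_sum_of_subset_of_nonneg
              (Finset.Icc_subset_Icc_right (Finset.mem_Icc.mp hk).2)
            intro j _ _; positivity) m)
      calc (∑ k ∈ Icc 1 n, mhsn k m / (k:ℝ)) ≤ ∑ k ∈ Icc 1 n, (myH n)^m * (1/(k:ℝ)) :=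
            Finset.sum_le_sum this
        _ = (myH n)^m * myH n := by rw [← Finset.mul_sum]; rfl
        _ = (myH n)^(m+1) := by ring

lemma myH_le_log : ∀ n : ℕ, myH n ≤ 1 + Real.log n := by
  intro n
  induction n with
  | zero => simp [myH, Real.log_zero]
  | succ n ih =>
      have hstep : myH (n+1) = myH n + 1/((n:ℝ)+1) := by
        show (∑ j ∈ Icc 1 (n+1), 1/(j:ℝ)) = _
        rw [Finset.sum_Icc_succ_top (by omega)]
        norm_cast
      cases n with
      | zero => simp [myH, hstep]
      | succ n =>
          rw [hstep]
          have hlog : Real.log ((n:ℝ)+1) + 1/((n:ℝ)+2) ≤ Real.log ((n:ℝ)+2) := by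
            have hpos : (0:ℝ) < ((n:ℝ)+1)/((n:ℝ)+2) := by positivity
            have := Real.log_le_sub_one_of_pos hpos
            rw [Real.log_div (by positivity) (by positivity)] at this
            have h2 : ((n:ℝ)+1)/((n:ℝ)+2) - 1 = -(1/((n:ℝ)+2)) := by
              field_simp
              ring
            rw [h2] at this
            linarith
          have hc : Real.log ((n:ℝ)+1+1) = Real.log ((n:ℝ)+2) := by
            rw [show ((n:ℝ)+1+1) = (n:ℝ)+2 by ring]
          have hd : 1/((n:ℝ)+1+1) = 1/((n:ℝ)+2) := by
            rw [show ((n:ℝ)+1+1) = (n:ℝ)+2 by ring]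
          push_cast at ih ⊢
          rw [hc, hd]
          linarith

lemma mhn_bound (j m : ℕ) (hm : 1 ≤ m) :
    mhn m j ≤ (2*(j:ℝ)+1)^j * (m:ℝ)^((2:ℝ)⁻¹) := by
  have hm1 : (1:ℝ) ≤ (m:ℝ) := by exact_mod_cast hm
  have hx : (1:ℝ) ≤ (m:ℝ)^((2:ℝ)⁻¹) := by
    calc (1:ℝ) = (m:ℝ)^(0:ℝ) := (Real.rpow_zero _).symm
    _ ≤ _ := Real.rpow_le_rpow_of_exponent_le hm1 (by norm_num)
  cases j with
  | zero => simpa [mhn_zero'] using hx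
  | succ j =>
      set ε : ℝ := ((2:ℝ)*((j:ℝ)+1))⁻¹ with hε
      have hεpos : (0:ℝ) < ε := by positivity
      have hmpos : (0:ℝ) < (m:ℝ) := by linarith
      have hone : (1:ℝ) ≤ (m:ℝ)^ε := by
        calc (1:ℝ) = (m:ℝ)^(0:ℝ) := (Real.rpow_zero _).symm
        _ ≤ _ := Real.rpow_le_rpow_of_exponent_le hm1 (le_of_lt hεpos)
      have hlog : Real.log m ≤ (m:ℝ)^ε / ε := by
        have h1 : Real.log ((m:ℝ)^ε) = ε * Real.log m := Real.log_rpow hmpos ε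
        have h2 : Real.log ((m:ℝ)^ε) ≤ (m:ℝ)^ε - 1 := Real.log_le_sub_one_of_pos (by positivity)
        rw [le_div_iff₀ hεpos]
        nlinarith [h1, h2]
      have hH : myH m ≤ (2*((j:ℝ)+1)+1) * (m:ℝ)^ε := by
        have := myH_le_log m
        have hdiv : (m:ℝ)^ε / ε = 2*((j:ℝ)+1) * (m:ℝ)^ε := by
          rw [hε, div_eq_mul_inv, inv_inv]
          ring
        nlinarith [this, hlog, hone]
      have hHn : 0 ≤ myH m := myH_nonneg m
      calc mhn m (j+1) ≤ mhsn m (j+1) := mhn_le_mhsn (j+1) m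
        _ ≤ (myH m)^(j+1) := mhsn_le_pow (j+1) m
        _ ≤ ((2*((j:ℝ)+1)+1) * (m:ℝ)^ε)^(j+1) := pow_le_pow_left₀ hHn hH (j+1)
        _ = (2*((j:ℝ)+1)+1)^(j+1) * ((m:ℝ)^ε)^(j+1) := mul_pow _ _ _
        _ = (2*((j:ℝ)+1)+1)^(j+1) * (m:ℝ)^((2:ℝ)⁻¹) := by
            congr 1
            rw [← Real.rpow_natCast ((m:ℝ)^ε) (j+1), ← Real.rpow_mul (le_of_lt hmpos)]
            congr 1
            rw [hε]
            push_cast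
            field_simp
        _ = (2*((j:ℝ)+1)+1)^(j+1) * (m:ℝ)^((2:ℝ)⁻¹) := rfl
        _ = (2*((j+1:ℕ):ℝ)+1)^(j+1) * (m:ℝ)^((2:ℝ)⁻¹) := by push_cast; ring

lemma summable_aux (r j q : ℕ) (hq : 2 ≤ q) :
    Summable (fun n : ℕ => mhn (n+1+r) j / ((n:ℝ)+1)^q) := by
  set C : ℝ := (2*(j:ℝ)+1)^j * ((r:ℝ)+1)^((2:ℝ)⁻¹) with hC
  have hCpos : (0:ℝ) ≤ C := by positivity
  have hg : Summable (fun n : ℕ => C * (1/((n:ℝ)+1)^((3:ℝ)/2))) := by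
    apply Summable.mul_left
    have h1 := (Real.summable_one_div_nat_rpow (p := 3/2)).mpr (by norm_num)
    have h2 := (summable_nat_add_iff 1).mpr h1
    convert h2 using 2 with n
    · rfl
    push_cast
    ring_nf
  apply Summable.of_nonneg_of_le _ _ hg
  · intro n
    exact div_nonneg (mhn_nonneg _ _) (by positivity)
  · intro n
    have hb := mhn_bound j (n+1+r) (by omega)
    have hnp : (0:ℝ) < ((n:ℝ)+1) := by positivity
    have h1 : ((n+1+r:ℕ):ℝ)^((2:ℝ)⁻¹) ≤ ((n:ℝ)+1)^((2:ℝ)⁻¹) * ((r:ℝ)+1)^((2:ℝ)⁻¹) := by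
      rw [← Real.mul_rpow (by positivity) (by positivity)]
      apply Real.rpow_le_rpow (by positivity) ?_ (by norm_num)
      push_cast
      nlinarith [Nat.cast_nonneg (α := ℝ) n, Nat.cast_nonneg (α := ℝ) r]
    have h2 : ((n:ℝ)+1)^((2:ℝ)⁻¹) * ((n:ℝ)+1)^((3:ℝ)/2) ≤ ((n:ℝ)+1)^q := by
      rw [← Real.rpow_add hnp, show (2:ℝ)⁻¹ + 3/2 = (2:ℝ) by norm_num,
        show ((n:ℝ)+1)^(2:ℝ) = ((n:ℝ)+1)^(2:ℕ) from by
          rw [← Real.rpow_natCast ((n:ℝ)+1) 2]; norm_num]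
      exact pow_le_pow_right₀ (by linarith) hq
    rw [div_le_iff₀ (by positivity)]
    calc mhn (n+1+r) j ≤ (2*(j:ℝ)+1)^j * ((n+1+r:ℕ):ℝ)^((2:ℝ)⁻¹) := hb
      _ ≤ (2*(j:ℝ)+1)^j * (((n:ℝ)+1)^((2:ℝ)⁻¹) * ((r:ℝ)+1)^((2:ℝ)⁻¹)) := by
          apply mul_le_mul_of_nonneg_left h1 (by positivity)
      _ = C * ((n:ℝ)+1)^((2:ℝ)⁻¹) := by rw [hC]; ring
      _ ≤ C * (1/((n:ℝ)+1)^((3:ℝ)/2) * ((n:ℝ)+1)^q) := by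
          apply mul_le_mul_of_nonneg_left ?_ hCpos
          rw [one_div, inv_mul_eq_div, le_div_iff₀ (by positivity)]
          exact h2
      _ = C * (1/((n:ℝ)+1)^((3:ℝ)/2)) * ((n:ℝ)+1)^q := by ring

/-- Theorem 1.1: for `k ≥ 1`, `r ≥ 0`, `p ≥ r+2`,
`S(k, r+1; p) = (1/r!) ∑_{l=1}^{r+1} [r+1; l] ∑_{i+j=k} (-1)^i ζ_r^⋆({1}_i) U_{j,r}(p+1-l)`. -/
theorem euler_sum_generalized_hyperharmonic (k r p : ℕ) (hk : 1 ≤ k) (hp : r + 2 ≤ p) :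
    ∑' n : ℕ, gh (n + 1) (r + 1) k / (n + 1 : ℝ) ^ p =
      (1 / (Nat.factorial r : ℝ)) *
        ∑ l ∈ Finset.Icc 1 (r + 1), (stir1 (r + 1) l : ℝ) *
          ∑ i ∈ Finset.range (k + 1),
            (-1 : ℝ) ^ i * mhsn r i * Usum (k - i) r (p + 1 - l) := by
  obtain ⟨k', rfl⟩ : ∃ k'', k = k'' + 1 := ⟨k - 1, by omega⟩
  have hfac : (Nat.factorial r : ℝ) ≠ 0 := by
    exact_mod_cast Nat.factorial_ne_zero r
  -- pointwise identity
  have hpoint : ∀ n : ℕ, gh (n+1) (r+1) (k'+1) / ((n:ℝ)+1)^p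
      = ∑ l ∈ Icc 1 (r+1), ∑ i ∈ range (k'+2),
          ((1/(Nat.factorial r:ℝ)) * (stir1 (r+1) l : ℝ) * ((-1:ℝ)^i * mhsn r i))
            * (mhn (n+1+r) (k'+1-i) / ((n:ℝ)+1)^(p+1-l)) := by
    intro n
    have h0 : gh (n+1) (r+1) (k'+1) = hypAux r (n+1) (k'+1) := by
      simp [gh]
    rw [h0, hyp_eq r (n+1) k', ← claimC r (n+1) (k'+1)]
    have key : ∀ l ∈ Icc 1 (r+1), ∑ i ∈ range (k'+2),
        ((1/(Nat.factorial r:ℝ)) * (stir1 (r+1) l : ℝ) * ((-1:ℝ)^i * mhsn r i))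
          * (mhn (n+1+r) (k'+1-i) / ((n:ℝ)+1)^(p+1-l))
        = (stir1 (r+1) l : ℝ) * ((n:ℝ)+1)^(l-1)
          * ((1/(Nat.factorial r:ℝ))
            * (∑ i ∈ range (k'+2), (-1:ℝ)^i * mhsn r i * mhn (n+1+r) (k'+1-i))
            / ((n:ℝ)+1)^p) := by
      intro l hl
      obtain ⟨hl1, hl2⟩ := Finset.mem_Icc.mp hl
      have hXY : ((n:ℝ)+1)^(p+1-l) * ((n:ℝ)+1)^(l-1) = ((n:ℝ)+1)^p := by
        rw [← pow_add]
        congr 1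
        omega
      have hX : ((n:ℝ)+1)^(p+1-l) ≠ 0 := by positivity
      have hY : ((n:ℝ)+1)^(l-1) ≠ 0 := by positivity
      have hterm : ∀ i ∈ range (k'+2),
          ((1/(Nat.factorial r:ℝ)) * (stir1 (r+1) l : ℝ) * ((-1:ℝ)^i * mhsn r i))
            * (mhn (n+1+r) (k'+1-i) / ((n:ℝ)+1)^(p+1-l))
          = ((1/(Nat.factorial r:ℝ)) * (stir1 (r+1) l : ℝ) / ((n:ℝ)+1)^(p+1-l))
            * ((-1:ℝ)^i * mhsn r i * mhn (n+1+r) (k'+1-i)) := by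
        intro i _
        ring
      rw [Finset.sum_congr rfl hterm, ← Finset.mul_sum, ← hXY]
      field_simp
    rw [Finset.sum_congr rfl key, ← Finset.sum_mul, ← choose_real n r]
    field_simp
  rw [tsum_congr hpoint]
  -- summability of each (l,i) term
  have hsummand : ∀ l ∈ Icc 1 (r+1), ∀ i ∈ range (k'+2),
      Summable (fun n : ℕ =>
        ((1/(Nat.factorial r:ℝ)) * (stir1 (r+1) l : ℝ) * ((-1:ℝ)^i * mhsn r i))
          * (mhn (n+1+r) (k'+1-i) / ((n:ℝ)+1)^(p+1-l))) := by
    intro l hl i _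
    obtain ⟨hl1, hl2⟩ := Finset.mem_Icc.mp hl
    exact (summable_aux r (k'+1-i) (p+1-l) (by omega)).mul_left _
  rw [Summable.tsum_finsetSum (fun l hl => summable_sum (fun i hi => hsummand l hl i hi))]
  have hinner : ∀ l ∈ Icc 1 (r+1), ∑' (n : ℕ), ∑ i ∈ range (k'+2),
      ((1/(Nat.factorial r:ℝ)) * (stir1 (r+1) l : ℝ) * ((-1:ℝ)^i * mhsn r i))
        * (mhn (n+1+r) (k'+1-i) / ((n:ℝ)+1)^(p+1-l))
      = ∑ i ∈ range (k'+2),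
        ((1/(Nat.factorial r:ℝ)) * (stir1 (r+1) l : ℝ) * ((-1:ℝ)^i * mhsn r i))
          * Usum (k'+1-i) r (p+1-l) := by
    intro l hl
    rw [Summable.tsum_finsetSum (fun i hi => hsummand l hl i hi)]
    apply Finset.sum_congr rfl
    intro i _
    rw [tsum_mul_left]
    rfl
  rw [Finset.sum_congr rfl hinner]
  rw [Finset.mul_sum]
  apply Finset.sum_congr rfl
  intro l _
  rw [Finset.mul_sum, Finset.mul_sum]
  apply Finset.sum_congr rfl
  intro i _
  ring
end

section
/- For all positive integers m, n and k, the generalized hyperharmonic numbers satisfy the recurrence h_n^{(m)}(k) = ((−1)^{k−1}/k) · Σ_{i=0}^{k−1} (−1)^i · h_n^{(m)}(i) · ( H_{m+n−1}^{(k−i)} − H_{m−1}^{(k−i)} ), where h_n^{(m)}(0) = C(m+n−1, m−1) is the binomial coefficient. -/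
open Finset

/-! ### Auxiliary development for the proof -/

noncomputable def Em (s : Finset ℕ) (k : ℕ) : ℝ :=
  (Multiset.map (fun j : ℕ => (j : ℝ)⁻¹) s.val).esymm k

lemma esymm_cons_aux (a : ℝ) (s : Multiset ℝ) (k : ℕ) :
    (a ::ₘ s).esymm (k + 1) = s.esymm (k + 1) + a * s.esymm k := by
  simp [Multiset.esymm, Multiset.powersetCard_cons, Multiset.map_map, Function.comp,
    Multiset.sum_map_mul_left]

lemma Em_zero (s : Finset ℕ) : Em s 0 = 1 := by
  simp [Em, Multiset.esymm]

lemma Em_empty (k : ℕ) : Em ∅ (k + 1) = 0 := by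
  simp [Em, Multiset.esymm, Multiset.powersetCard_zero_right]

lemma Em_insert {a : ℕ} {s : Finset ℕ} (h : a ∉ s) (k : ℕ) :
    Em (insert a s) (k + 1) = Em s (k + 1) + (a : ℝ)⁻¹ * Em s k := by
  simp only [Em, Finset.insert_val_of_notMem h, Multiset.map_cons, esymm_cons_aux]

lemma mhn_eq_Em : ∀ n k, mhn n k = Em (Finset.Icc 1 n) k := by
  intro n
  induction n with
  | zero =>
    intro k
    cases k with
    | zero => simp [mhn, Em_zero]
    | succ k => simp [mhn, Em_empty]
  | succ n ih =>
    intro k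
    cases k with
    | zero => simp [mhn, Em_zero]
    | succ k =>
      have hins : Finset.Icc 1 (n + 1) = insert (n + 1) (Finset.Icc 1 n) :=
        (Finset.insert_Icc_right_eq_Icc_add_one (Nat.le_add_left 1 n)).symm
      have hnotmem : (n + 1) ∉ Finset.Icc 1 n := by simp
      show (∑ j ∈ Finset.Icc 1 (n+1), mhn (j - 1) k / (j : ℝ)) = _
      rw [hins, Finset.sum_insert hnotmem, Em_insert hnotmem]
      have h2 : (∑ j ∈ Finset.Icc 1 n, mhn (j - 1) k / (j : ℝ)) = mhn n (k + 1) := rfl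
      rw [h2, ih]
      simp only [Nat.add_sub_cancel]
      rw [ih]
      ring


lemma sum_choose_Em (m k : ℕ) : ∀ n,
    ∑ j ∈ Finset.Icc 1 n, ((m+j).choose m : ℝ) * Em (Finset.Icc (m+1) (m+j)) (k+1)
      = ((m+n+1).choose (m+1) : ℝ) * Em (Finset.Icc (m+2) (m+n+1)) (k+1) := by
  intro n
  induction n with
  | zero =>
    rw [show Finset.Icc (m+2) (m+0+1) = ∅ from Finset.Icc_eq_empty (by omega)]
    simp [Em_empty]
  | succ n ih =>
    have hins : Finset.Icc 1 (n+1) = insert (n+1) (Finset.Icc 1 n) :=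
      (Finset.insert_Icc_right_eq_Icc_add_one (by omega)).symm
    rw [hins, Finset.sum_insert (by simp), ih]
    show ((m+n+1).choose m : ℝ) * Em (Finset.Icc (m+1) (m+n+1)) (k+1)
        + ((m+n+1).choose (m+1) : ℝ) * Em (Finset.Icc (m+2) (m+n+1)) (k+1)
      = ((m+n+2).choose (m+1) : ℝ) * Em (Finset.Icc (m+2) (m+n+2)) (k+1)
    have hA : Finset.Icc (m+1) (m+n+1) = insert (m+1) (Finset.Icc (m+2) (m+n+1)) :=
      (Finset.insert_Icc_add_one_left_eq_Icc (by omega)).symm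
    have hB : Finset.Icc (m+2) (m+n+2) = insert (m+n+2) (Finset.Icc (m+2) (m+n+1)) :=
      (Finset.insert_Icc_right_eq_Icc_add_one (by omega)).symm
    have hmA : (m+1) ∉ Finset.Icc (m+2) (m+n+1) := by simp
    have hmB : (m+n+2) ∉ Finset.Icc (m+2) (m+n+1) := by simp
    rw [hA, hB, Em_insert hmA, Em_insert hmB]
    have hp : ((m+n+2).choose (m+1) : ℝ)
        = ((m+n+1).choose m : ℝ) + ((m+n+1).choose (m+1) : ℝ) := by
      exact_mod_cast congrArg (Nat.cast : ℕ → ℝ) (Nat.choose_succ_succ (m+n+1) m)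
    have hq : ((m+n+2) : ℝ) * ((m+n+1).choose m : ℝ)
        = ((m+n+2).choose (m+1) : ℝ) * ((m+1) : ℝ) := by
      exact_mod_cast congrArg (Nat.cast : ℕ → ℝ) (Nat.add_one_mul_choose_eq (m+n+1) m)
    have h1 : ((m:ℝ)+1) ≠ 0 := by positivity
    have h2 : ((m:ℝ)+(n:ℝ)+2) ≠ 0 := by positivity
    have key : ((m+n+2).choose (m+1) : ℝ) * (((m:ℝ)+(n:ℝ)+2))⁻¹
        = ((m+n+1).choose m : ℝ) * (((m:ℝ)+1))⁻¹ := by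
      field_simp
      push_cast at hq ⊢
      linear_combination -hq
    push_cast
    push_cast at hp key
    linear_combination (-(Em (Finset.Icc (m+2) (m+n+1)) (k+1))) * hp
      - (Em (Finset.Icc (m+2) (m+n+1)) k) * key

lemma hypAux_eq (m : ℕ) : ∀ n k, hypAux m n (k+1)
    = ((m+n).choose m : ℝ) * Em (Finset.Icc (m+1) (m+n)) (k+1) := by
  induction m with
  | zero =>
    intro n k
    rw [show hypAux 0 n (k+1) = mhn n (k+1) from rfl, mhn_eq_Em]
    simp
  | succ m ih =>
    intro n k
    show (∑ j ∈ Finset.Icc 1 n, hypAux m j (k+1)) = _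
    rw [Finset.sum_congr rfl (fun j _ => ih j k), sum_choose_Em m k n]
    rw [show m+1+n = m+n+1 from by omega, show m+1+1 = m+2 from rfl]



lemma newton_antidiag (s : Finset ℕ) (k : ℕ) :
    (k : ℝ) * Em s k = (-1)^(k+1) *
      ∑ a ∈ (Finset.HasAntidiagonal.antidiagonal k).filter (fun a => a.1 < k),
        (-1)^a.1 * Em s a.1 * (∑ j ∈ s, ((j:ℝ)⁻¹)^a.2) := by
  have h := congrArg (MvPolynomial.aeval (fun j : ↥s => ((j : ℕ) : ℝ)⁻¹))
    (MvPolynomial.mul_esymm_eq_sum (↥s) ℝ k)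
  simp only [map_mul, map_natCast, map_pow, map_neg, map_one, map_sum,
    MvPolynomial.aeval_esymm_eq_multiset_esymm, MvPolynomial.psum, MvPolynomial.aeval_X] at h
  have hE : ∀ i : ℕ, (Multiset.map (fun j : ↥s => ((j : ℕ) : ℝ)⁻¹) Finset.univ.val).esymm i = Em s i := by
    intro i
    rw [Em]
    congr 1
    rw [Finset.univ_eq_attach, Finset.attach_val]
    exact @Multiset.attach_map_val' ℕ ℝ s.val (fun j => (j:ℝ)⁻¹)
  rw [hE k] at h
  rw [h]
  congr 1
  apply Finset.sum_congr rfl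
  intro a _
  rw [hE a.1]
  congr 1
  rw [Finset.univ_eq_attach]
  exact Finset.sum_attach s (fun j => ((j:ℕ):ℝ)⁻¹ ^ a.2)

lemma sum_filter_antidiag (k : ℕ) (g : ℕ → ℕ → ℝ) :
    ∑ a ∈ (Finset.HasAntidiagonal.antidiagonal k).filter (fun a => a.1 < k), g a.1 a.2
      = ∑ i ∈ Finset.range k, g i (k - i) := by
  rw [Finset.sum_filter, Finset.Nat.sum_antidiagonal_eq_sum_range_succ_mk, Finset.sum_range_succ]
  simp only [lt_irrefl, if_false, add_zero]
  apply Finset.sum_congr rfl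
  intro i hi
  rw [if_pos (Finset.mem_range.mp hi)]

lemma newton_Em (s : Finset ℕ) (k : ℕ) :
    (k : ℝ) * Em s k = (-1)^(k+1) *
      ∑ i ∈ Finset.range k, (-1)^i * Em s i * (∑ j ∈ s, ((j:ℝ)⁻¹)^(k-i)) := by
  rw [newton_antidiag,
    sum_filter_antidiag k (fun i p => (-1)^i * Em s i * (∑ j ∈ s, ((j:ℝ)⁻¹)^p))]

lemma genH_sub (p m n : ℕ) (hm : 1 ≤ m) :
    genH p (m+n-1) - genH p (m-1) = ∑ j ∈ Finset.Icc m (m+n-1), ((j:ℝ)⁻¹)^p := by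
  obtain ⟨m, rfl⟩ := Nat.exists_eq_add_of_le hm
  rw [show 1 + m + n - 1 = m + n from by omega, show 1 + m - 1 = m from by omega,
    show 1 + m = m + 1 from by omega]
  have hsplit : Finset.Icc 1 (m+n) = Finset.Icc 1 m ∪ Finset.Icc (m+1) (m+n) := by
    ext a
    simp only [Finset.mem_Icc, Finset.mem_union]
    omega
  have hdisj : Disjoint (Finset.Icc 1 m) (Finset.Icc (m+1) (m+n)) := by
    rw [Finset.disjoint_left]
    intro a ha hb
    simp only [Finset.mem_Icc] at ha hb
    omega
  rw [genH, genH, hsplit, Finset.sum_union hdisj]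
  simp [one_div, inv_pow]

/-- Lemma 2.2: recurrence for the generalized hyperharmonic numbers,
`h_n^{(m)}(k) = ((-1)^{k-1}/k) ∑_{i=0}^{k-1} (-1)^i h_n^{(m)}(i) (H_{m+n-1}^{(k-i)} - H_{m-1}^{(k-i)})`,
where `h_n^{(m)}(0) = C(m+n-1, m-1)`. -/
theorem gh_recurrence (m n k : ℕ) (hm : 1 ≤ m) (hn : 1 ≤ n) (hk : 1 ≤ k) :
    gh n m k =
      ((-1 : ℝ) ^ (k - 1) / (k : ℝ)) *
        ∑ i ∈ Finset.range k,
          (-1 : ℝ) ^ i * gh n m i * (genH (k - i) (m + n - 1) - genH (k - i) (m - 1)) := by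
  obtain ⟨k, rfl⟩ : ∃ k', k = k' + 1 := ⟨k - 1, by omega⟩
  set s : Finset ℕ := Finset.Icc m (m + n - 1) with hs
  set C : ℝ := (((m + n - 1).choose (m - 1) : ℕ) : ℝ) with hC
  have ghi : ∀ i, gh n m i = C * Em s i := by
    intro i
    cases i with
    | zero => rw [gh]; simp [Em_zero, hC]
    | succ i =>
      rw [gh, if_neg (by omega), hypAux_eq (m - 1) n i,
        show m - 1 + 1 = m from by omega, show m - 1 + n = m + n - 1 from by omega]
  have hsum : ∑ i ∈ Finset.range (k+1),
        (-1 : ℝ) ^ i * gh n m i * (genH (k + 1 - i) (m + n - 1) - genH (k + 1 - i) (m - 1))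
      = C * ∑ i ∈ Finset.range (k+1),
        (-1 : ℝ)^i * Em s i * (∑ j ∈ s, ((j:ℝ)⁻¹)^(k + 1 - i)) := by
    rw [Finset.mul_sum]
    apply Finset.sum_congr rfl
    intro i _
    rw [ghi i, genH_sub (k + 1 - i) m n hm]
    ring
  rw [hsum, ghi (k+1)]
  have hnewton := newton_Em s (k+1)
  have hpow : ((-1 : ℝ))^(k+1+1) = (-1 : ℝ)^k := by
    rw [pow_succ, pow_succ]; ring
  rw [hpow] at hnewton
  push_cast at hnewton
  have hsq : ((-1 : ℝ)^k) * ((-1 : ℝ)^k) = 1 := by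
    rw [← pow_add]
    exact Even.neg_one_pow ⟨k, rfl⟩
  have hNE : ((k : ℝ) + 1) ≠ 0 := by positivity
  rw [show k + 1 - 1 = k from by omega]
  push_cast
  have hS : ∑ i ∈ Finset.range (k+1),
        (-1 : ℝ)^i * Em s i * (∑ j ∈ s, ((j:ℝ)⁻¹)^(k + 1 - i))
      = (-1 : ℝ)^k * (((k : ℝ) + 1) * Em s (k+1)) := by
    calc ∑ i ∈ Finset.range (k+1), (-1 : ℝ)^i * Em s i * (∑ j ∈ s, ((j:ℝ)⁻¹)^(k + 1 - i))
        = ((-1 : ℝ)^k * (-1 : ℝ)^k) * ∑ i ∈ Finset.range (k+1),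
            (-1 : ℝ)^i * Em s i * (∑ j ∈ s, ((j:ℝ)⁻¹)^(k + 1 - i)) := by rw [hsq, one_mul]
      _ = (-1 : ℝ)^k * (((k : ℝ) + 1) * Em s (k+1)) := by rw [mul_assoc, ← hnewton]
  rw [hS, div_mul_eq_mul_div, eq_div_iff hNE]
  linear_combination (-(C * Em s (k+1) * ((k : ℝ) + 1))) * hsq
end

section
/- For integers r ≥ 0, m ≥ 1 and n ≥ 1, Σ_{1 ≤ k_m < ⋯ < k_1 ≤ n} 1/((k_1 + r)(k_2 + r)⋯(k_m + r)) = Σ_{i+j=m, i,j ≥ 0} (−1)^i · ζ_r^⋆({1}_i) · ζ_{n+r}({1}_j). -/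
open Finset

lemma mhn_zero_left (m : ℕ) : mhn 0 m = if m = 0 then 1 else 0 := by
  cases m with
  | zero => simp [mhn]
  | succ m => simp [mhn]

lemma mhsn_zero_left (m : ℕ) : mhsn 0 m = if m = 0 then 1 else 0 := by
  cases m with
  | zero => simp [mhsn]
  | succ m => simp [mhsn]

lemma mhn_rec (r m : ℕ) :
    mhn (r + 1) (m + 1) = mhn r (m + 1) + 1 / ((r : ℝ) + 1) * mhn r m := by
  show (∑ k ∈ Icc 1 (r + 1), mhn (k - 1) m / (k : ℝ)) = _
  rw [Finset.sum_Icc_succ_top (by omega)]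
  have : (∑ k ∈ Icc 1 r, mhn (k - 1) m / (k : ℝ)) = mhn r (m + 1) := rfl
  rw [this]
  push_cast
  ring

lemma mhsn_rec (r m : ℕ) :
    mhsn (r + 1) (m + 1) = mhsn r (m + 1) + 1 / ((r : ℝ) + 1) * mhsn (r + 1) m := by
  show (∑ k ∈ Icc 1 (r + 1), mhsn k m / (k : ℝ)) = _
  rw [Finset.sum_Icc_succ_top (by omega)]
  have : (∑ k ∈ Icc 1 r, mhsn k m / (k : ℝ)) = mhsn r (m + 1) := rfl
  rw [this]
  push_cast
  ring

lemma conv_step (r m : ℕ) :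
    ∑ i ∈ range (m + 1), (-1 : ℝ) ^ i * mhsn (r + 1) i * mhn (r + 1) (m - i)
      = ∑ i ∈ range (m + 1), (-1 : ℝ) ^ i * mhsn r i * mhn r (m - i) := by
  set c : ℝ := 1 / ((r : ℝ) + 1) with hc
  have h1 : ∑ i ∈ range (m + 1), (-1 : ℝ) ^ i * mhsn (r + 1) i * mhn (r + 1) (m - i)
      = ∑ i ∈ range (m + 1), (-1 : ℝ) ^ i * mhsn (r + 1) i * mhn r (m - i)
        + c * ∑ i ∈ range m, (-1 : ℝ) ^ i * mhsn (r + 1) i * mhn r (m - 1 - i) := by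
    rw [Finset.sum_range_succ, Finset.sum_range_succ
      (f := fun i => (-1 : ℝ) ^ i * mhsn (r + 1) i * mhn r (m - i))]
    have hstep : ∀ i ∈ range m,
        (-1 : ℝ) ^ i * mhsn (r + 1) i * mhn (r + 1) (m - i)
          = (-1 : ℝ) ^ i * mhsn (r + 1) i * mhn r (m - i)
            + c * ((-1 : ℝ) ^ i * mhsn (r + 1) i * mhn r (m - 1 - i)) := by
      intro i hi
      rw [mem_range] at hi
      rw [show m - i = (m - 1 - i) + 1 from by omega, mhn_rec]
      ring
    rw [Finset.sum_congr rfl hstep, Finset.sum_add_distrib, Finset.mul_sum]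
    have : mhn (r + 1) (m - m) = mhn r (m - m) := by simp [mhn]
    rw [this]; ring
  have h2 : ∑ i ∈ range (m + 1), (-1 : ℝ) ^ i * mhsn (r + 1) i * mhn r (m - i)
      = ∑ i ∈ range (m + 1), (-1 : ℝ) ^ i * mhsn r i * mhn r (m - i)
        - c * ∑ i ∈ range m, (-1 : ℝ) ^ i * mhsn (r + 1) i * mhn r (m - 1 - i) := by
    rw [Finset.sum_range_succ' (fun i => (-1 : ℝ) ^ i * mhsn (r + 1) i * mhn r (m - i)),
        Finset.sum_range_succ' (fun i => (-1 : ℝ) ^ i * mhsn r i * mhn r (m - i))]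
    have hstep : ∀ i ∈ range m,
        (-1 : ℝ) ^ (i + 1) * mhsn (r + 1) (i + 1) * mhn r (m - (i + 1))
          = (-1 : ℝ) ^ (i + 1) * mhsn r (i + 1) * mhn r (m - (i + 1))
            - c * ((-1 : ℝ) ^ i * mhsn (r + 1) i * mhn r (m - 1 - i)) := by
      intro i hi
      rw [mem_range] at hi
      rw [mhsn_rec, show m - (i + 1) = m - 1 - i from by omega]
      ring
    rw [Finset.sum_congr rfl hstep, Finset.sum_sub_distrib, Finset.mul_sum]
    have : mhsn (r + 1) 0 = mhsn r 0 := by simp [mhsn]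
    rw [this]; ring
  rw [h1, h2]; ring

lemma orth (r m : ℕ) :
    ∑ i ∈ range (m + 1), (-1 : ℝ) ^ i * mhsn r i * mhn r (m - i)
      = if m = 0 then 1 else 0 := by
  induction r with
  | zero =>
    cases m with
    | zero => simp [mhsn, mhn]
    | succ m =>
      rw [if_neg (by omega)]
      apply Finset.sum_eq_zero
      intro i hi
      rw [mem_range] at hi
      rcases Nat.eq_zero_or_pos i with h0 | h0
      · subst h0
        rw [mhn_zero_left, if_neg (by omega)]; ring
      · rw [mhsn_zero_left, if_neg (by omega)]; ring
  | succ r ih => rw [conv_step]; exact ih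

lemma mhn_split (r : ℕ) : ∀ m n, mhn (n + r) m
    = ∑ j ∈ range (m + 1), sdSum (fun k => 1 / ((k : ℝ) + r)) n j * mhn r (m - j) := by
  intro m
  induction m with
  | zero => intro n; simp [mhn, sdSum]
  | succ m ih =>
    intro n
    set a : ℕ → ℝ := fun k => 1 / ((k : ℝ) + r) with ha
    have lhs1 : mhn (n + r) (m + 1) = ∑ k ∈ Ioc 0 (n + r), mhn (k - 1) m / (k : ℝ) := by
      rw [← Finset.Icc_add_one_left_eq_Ioc]; rfl
    have hsplit : (∑ k ∈ Ioc 0 r, mhn (k - 1) m / (k : ℝ))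
        + (∑ k ∈ Ioc r (n + r), mhn (k - 1) m / (k : ℝ))
        = ∑ k ∈ Ioc 0 (n + r), mhn (k - 1) m / (k : ℝ) :=
      Finset.sum_Ioc_consecutive _ (by omega) (by omega)
    have hfirst : (∑ k ∈ Ioc 0 r, mhn (k - 1) m / (k : ℝ)) = mhn r (m + 1) := by
      rw [← Finset.Icc_add_one_left_eq_Ioc]; rfl
    have hsecond : (∑ k ∈ Ioc r (n + r), mhn (k - 1) m / (k : ℝ))
        = ∑ t ∈ Icc 1 n, a t * mhn ((t - 1) + r) m := by
      rw [show Ioc r (n + r) = Ioc (0 + r) (n + r) from by rw [Nat.zero_add],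
          ← Finset.map_add_right_Ioc, Finset.sum_map, ← Finset.Icc_add_one_left_eq_Ioc]
      apply Finset.sum_congr rfl
      intro t ht
      rw [mem_Icc] at ht
      simp only [addRightEmbedding_apply]
      rw [show t + r - 1 = (t - 1) + r from by omega, ha]
      push_cast
      ring
    have hIH : ∀ t ∈ Icc 1 n, a t * mhn ((t - 1) + r) m
        = ∑ j ∈ range (m + 1), a t * (sdSum a (t - 1) j * mhn r (m - j)) := by
      intro t ht
      rw [ih (t - 1), Finset.mul_sum]
    have hsecond2 : (∑ k ∈ Ioc r (n + r), mhn (k - 1) m / (k : ℝ))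
        = ∑ j ∈ range (m + 1), sdSum a n (j + 1) * mhn r (m - j) := by
      rw [hsecond, Finset.sum_congr rfl hIH, Finset.sum_comm]
      apply Finset.sum_congr rfl
      intro j _
      have : sdSum a n (j + 1) = ∑ t ∈ Icc 1 n, a t * sdSum a (t - 1) j := rfl
      rw [this, Finset.sum_mul]
      apply Finset.sum_congr rfl
      intro t _
      ring
    rw [lhs1, ← hsplit, hfirst, hsecond2,
        Finset.sum_range_succ' (fun j => sdSum a n j * mhn r (m + 1 - j))]
    simp only [Nat.succ_sub_succ, Nat.sub_zero]
    have : sdSum a n 0 * mhn r (m + 1) = mhn r (m + 1) := by simp [sdSum]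
    rw [this, add_comm]

/-- Theorem 2.6: for `r ≥ 0`, `m, n ≥ 1`,
`∑_{1 ≤ k_m < ⋯ < k₁ ≤ n} 1/((k₁+r)⋯(k_m+r)) = ∑_{i+j=m} (-1)^i ζ_r^⋆({1}_i) ζ_{n+r}({1}_j)`. -/
theorem shifted_mhn_eq (r m n : ℕ) (hm : 1 ≤ m) (hn : 1 ≤ n) :
    sdSum (fun k => 1 / ((k : ℝ) + r)) n m =
      ∑ i ∈ Finset.range (m + 1), (-1 : ℝ) ^ i * mhsn r i * mhn (n + r) (m - i) := by
  set a : ℕ → ℝ := fun k => 1 / ((k : ℝ) + r) with ha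
  have step1 : ∀ i ∈ range (m + 1),
      (-1 : ℝ) ^ i * mhsn r i * mhn (n + r) (m - i)
        = ∑ j ∈ range (m + 1 - i), (-1 : ℝ) ^ i * mhsn r i * (sdSum a n j * mhn r (m - i - j)) := by
    intro i hi
    rw [mem_range] at hi
    rw [mhn_split r (m - i) n, Finset.mul_sum, show (m - i) + 1 = m + 1 - i from by omega]
  rw [Finset.sum_congr rfl step1]
  rw [Finset.sum_comm' (s' := fun j => range (m + 1 - j)) (t' := range (m + 1))
    (by intro i j; simp only [mem_range]; omega)]
  have step2 : ∀ j ∈ range (m + 1),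
      (∑ i ∈ range (m + 1 - j), (-1 : ℝ) ^ i * mhsn r i * (sdSum a n j * mhn r (m - i - j)))
        = sdSum a n j * (if m - j = 0 then 1 else 0) := by
    intro j hj
    rw [mem_range] at hj
    rw [← orth r (m - j), Finset.mul_sum, show (m - j) + 1 = m + 1 - j from by omega]
    apply Finset.sum_congr rfl
    intro i _
    rw [show m - j - i = m - i - j from by omega]
    ring
  rw [Finset.sum_congr rfl step2]
  rw [Finset.sum_eq_single_of_mem m (self_mem_range_succ m) (fun j hj hne => by
    rw [mem_range] at hj
    rw [if_neg (by omega : ¬ (m - j = 0))]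
    ring), Nat.sub_self, if_pos rfl, mul_one]
end

section
/- For integers r ≥ 0, m ≥ 1, n ≥ 1 and real p > 0, Σ_{1 ≤ k_m < ⋯ < k_1 ≤ n} 1/((k_1 + r)^p (k_2 + r)^p ⋯ (k_m + r)^p) = Σ_{i+j=m, i,j ≥ 0} (−1)^i · ζ_r^⋆({p}_i) · ζ_{n+r}({p}_j). -/
open Finset

lemma mhnP_zero (p : ℝ) (n : ℕ) : mhnP p n 0 = 1 := by simp [mhnP]
lemma mhnP_nil (p : ℝ) (m : ℕ) : mhnP p 0 (m+1) = 0 := by simp [mhnP]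
lemma mhsnP_nil (p : ℝ) (m : ℕ) : mhsnP p 0 (m+1) = 0 := by simp [mhsnP]
lemma mhnP_succ (p : ℝ) (n m : ℕ) :
    mhnP p (n+1) (m+1) = mhnP p n (m+1) + mhnP p n m / ((n:ℝ)+1)^p := by
  rw [mhnP, mhnP, Finset.sum_Icc_succ_top (by omega : 1 ≤ n+1)]
  push_cast
  simp
lemma mhsnP_succ (p : ℝ) (n m : ℕ) :
    mhsnP p (n+1) (m+1) = mhsnP p n (m+1) + mhsnP p (n+1) m / ((n:ℝ)+1)^p := by
  rw [mhsnP, mhsnP, Finset.sum_Icc_succ_top (by omega : 1 ≤ n+1)]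
  push_cast
  simp
lemma sdSum_succ {R : Type*} [Semiring R] (a : ℕ → R) (n m : ℕ) :
    sdSum a (n+1) (m+1) = sdSum a n (m+1) + a (n+1) * sdSum a n m := by
  rw [sdSum, sdSum, Finset.sum_Icc_succ_top (by omega : 1 ≤ n+1)]
  simp
lemma Qlem (p : ℝ) (r : ℕ) : ∀ m : ℕ,
    ∑ i ∈ Finset.range (m+1), (-1:ℝ)^i * mhsnP p r i * mhnP p r (m-i) =
      if m = 0 then 1 else 0 := by
  induction r with
  | zero =>
    intro m
    cases m with
    | zero => simp [mhnP_zero, mhsnP]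
    | succ m =>
      rw [if_neg (by omega)]
      apply Finset.sum_eq_zero
      intro i hi
      rcases Nat.eq_zero_or_pos i with h | h
      · subst h
        simp [mhnP_nil]
      · obtain ⟨j, rfl⟩ := Nat.exists_eq_add_of_lt h
        simp [mhsnP_nil]
  | succ r ih =>
    intro m
    induction m with
    | zero => simp [mhnP_zero, mhsnP]
    | succ m ihm =>
      rw [if_neg (by omega)]
      -- peel bottom index
      rw [Finset.sum_range_succ']
      -- rewrite each term with i+1 using mhsnP_succ
      have h1 : ∀ i ∈ Finset.range (m+1),
          (-1:ℝ)^(i+1) * mhsnP p (r+1) (i+1) * mhnP p (r+1) (m+1-(i+1)) =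
          (-1:ℝ)^(i+1) * mhsnP p r (i+1) * mhnP p (r+1) (m+1-(i+1))
            + (-1) * ((-1:ℝ)^i * mhsnP p (r+1) i * mhnP p (r+1) (m-i)) / ((r:ℝ)+1)^p := by
        intro i hi
        have : m+1-(i+1) = m-i := by omega
        rw [this, mhsnP_succ]
        ring
      rw [Finset.sum_congr rfl h1, Finset.sum_add_distrib]
      have h2 : ∑ i ∈ Finset.range (m+1),
          (-1) * ((-1:ℝ)^i * mhsnP p (r+1) i * mhnP p (r+1) (m-i)) / ((r:ℝ)+1)^p
          = (-1) * (if m = 0 then 1 else 0) / ((r:ℝ)+1)^p := by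
        rw [← ihm, Finset.mul_sum, Finset.sum_div]
      rw [h2]
      -- now reassemble first part into sum over range (m+2) of ζ*_r terms
      have h3 : (∑ i ∈ Finset.range (m+1),
            (-1:ℝ)^(i+1) * mhsnP p r (i+1) * mhnP p (r+1) (m+1-(i+1)))
          + (-1:ℝ)^0 * mhsnP p (r+1) 0 * mhnP p (r+1) (m+1-0)
          = ∑ i ∈ Finset.range (m+2), (-1:ℝ)^i * mhsnP p r i * mhnP p (r+1) (m+1-i) := by
        rw [Finset.sum_range_succ' (fun i => (-1:ℝ)^i * mhsnP p r i * mhnP p (r+1) (m+1-i)) (m+1)]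
        simp [mhsnP]
      rw [add_right_comm, h3]
      have h4 : ∑ i ∈ Finset.range (m+2), (-1:ℝ)^i * mhsnP p r i * mhnP p (r+1) (m+1-i)
          = (if m = 0 then 1 else 0) / ((r:ℝ)+1)^p := by
        rw [Finset.sum_range_succ]
        have h5 : ∀ i ∈ Finset.range (m+1), (-1:ℝ)^i * mhsnP p r i * mhnP p (r+1) (m+1-i)
            = (-1:ℝ)^i * mhsnP p r i * mhnP p r (m+1-i)
              + ((-1:ℝ)^i * mhsnP p r i * mhnP p r (m-i)) / ((r:ℝ)+1)^p := by
          intro i hi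
          simp only [Finset.mem_range] at hi
          have e : m+1-i = (m-i)+1 := by omega
          rw [e, mhnP_succ]
          have e2 : (m-i)+1-1 = m-i := by omega
          ring
        rw [Finset.sum_congr rfl h5, Finset.sum_add_distrib, ← Finset.sum_div, ih]
        have h6 : ∑ i ∈ Finset.range (m+1), (-1:ℝ)^i * mhsnP p r i * mhnP p r (m+1-i)
              + (-1:ℝ)^(m+1) * mhsnP p r (m+1) * mhnP p (r+1) (m+1-(m+1)) =
            ∑ i ∈ Finset.range (m+2), (-1:ℝ)^i * mhsnP p r i * mhnP p r (m+1-i) := by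
          conv_rhs => rw [Finset.sum_range_succ]
          simp only [Nat.sub_self, mhnP_zero, mul_one]
        rw [add_right_comm, h6, ih (m+1), if_neg (by omega)]
        ring
      rw [h4]
      ring
lemma mainlem (p : ℝ) (r : ℕ) : ∀ m n : ℕ,
    sdSum (fun k => 1 / ((k : ℝ) + r) ^ p) n m =
      ∑ i ∈ Finset.range (m + 1), (-1:ℝ)^i * mhsnP p r i * mhnP p (n + r) (m - i) := by
  intro m
  induction m with
  | zero => intro n; simp [sdSum, mhnP_zero, mhsnP]
  | succ m ihm =>
    intro n
    induction n with
    | zero =>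
      have h0 : sdSum (fun k => 1/((k:ℝ)+r)^p) 0 (m+1) = 0 := by rw [sdSum]; simp
      rw [h0, Nat.zero_add, Qlem p r (m+1), if_neg (by omega)]
    | succ n ihn =>
      rw [sdSum_succ, ihn, ihm n]
      have key : ∀ i ∈ Finset.range (m+1),
          (-1:ℝ)^i * mhsnP p r i * mhnP p (n+1+r) (m+1-i) =
            (-1:ℝ)^i * mhsnP p r i * mhnP p (n+r) (m+1-i)
              + ((-1:ℝ)^i * mhsnP p r i * mhnP p (n+r) (m-i)) / ((n:ℝ)+1+(r:ℝ))^p := by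
        intro i hi
        simp only [Finset.mem_range] at hi
        have e : m+1-i = (m-i)+1 := by omega
        have e2 : n+1+r = (n+r)+1 := by omega
        rw [e, e2, mhnP_succ]
        push_cast
        ring
      conv_rhs => rw [Finset.sum_range_succ, Finset.sum_congr rfl key,
        Finset.sum_add_distrib, ← Finset.sum_div]
      rw [Finset.sum_range_succ (fun i => (-1:ℝ)^i * mhsnP p r i * mhnP p (n+r) (m+1-i)) (m+1)]
      simp only [Nat.sub_self, mhnP_zero, mul_one]
      push_cast
      ring
/-- Theorem 2.7, strict version: for `r ≥ 0`, `m, n ≥ 1` and real `p > 0`,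
`∑_{1 ≤ k_m < ⋯ < k₁ ≤ n} 1/((k₁+r)^p ⋯ (k_m+r)^p) = ∑_{i+j=m} (-1)^i ζ_r^⋆({p}_i) ζ_{n+r}({p}_j)`. -/
theorem shifted_mhnP_eq (r m n : ℕ) (p : ℝ) (hm : 1 ≤ m) (hn : 1 ≤ n) (hp : 0 < p) :
    sdSum (fun k => 1 / ((k : ℝ) + r) ^ p) n m =
      ∑ i ∈ Finset.range (m + 1), (-1 : ℝ) ^ i * mhsnP p r i * mhnP p (n + r) (m - i) := by
  exact mainlem p r m n
end
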